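/- Let β ≥ 0, ν ≥ 0, ϑ₀ > 0, t₀ > 0, and δ > 0. Suppose λ : (ϑ₀−δ, ϑ₀+δ) → ℂ is a differentiable function with λ(ϑ₀) = i t₀, Re λ(ϑ) > −1 for all ϑ in the interval, satisfying ϑ·λ(ϑ) + G_{β,ν}(λ(ϑ)) = 0 for all ϑ in the interval, and assume D := ϑ₀ − G_{β,ν+1}(i t₀) ≠ 0. Then Re λ'(ϑ₀) = t₀ · φ'(t₀) / |D|², where φ(t) := Re G_{β,ν}(it). In particular, the sign of Re(dλ/dϑ) at the eigenvalue crossing equals the sign of (d/dt) Re G_{β,ν}(it) at t = t₀. -/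

import Mathlib

/-- The characteristic function `G_{β,μ}(λ) = ∫₀^∞ z^μ exp(−z^{β+1}/(β+1)) e^{−λz} dz`
of the linearized Becker–Döring bubblelator limit model. -/
noncomputable def G (β μ : ℝ) (l : ℂ) : ℂ :=
  ∫ z in Set.Ioi (0 : ℝ),
    ((z ^ μ * Real.exp (-z ^ (β + 1) / (β + 1)) : ℝ) : ℂ) * Complex.exp (-l * (z : ℂ))

open MeasureTheory Set

/-- `z - 1 ≤ z^(β+1)/(β+1)` for `z ≥ 0`, `β ≥ 0`. -/
lemma aux_rpow_lb {β : ℝ} (hβ : 0 ≤ β) {z : ℝ} (hz : 0 ≤ z) :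
    z - 1 ≤ z ^ (β + 1) / (β + 1) := by
  have hb1 : (0:ℝ) < β + 1 := by linarith
  have key : 1 + (β + 1) * (z - 1) ≤ z ^ (β + 1) := by
    have := one_add_mul_self_le_rpow_one_add (by linarith : (-1:ℝ) ≤ z - 1)
      (by linarith : (1:ℝ) ≤ β + 1)
    simpa using this
  rw [le_div_iff₀ hb1]
  nlinarith [key]

/-- Bound on the exponential weight. -/
lemma aux_exp_bound {β : ℝ} (hβ : 0 ≤ β) {z : ℝ} (hz : 0 ≤ z) :
    Real.exp (-z ^ (β + 1) / (β + 1)) ≤ Real.exp 1 * Real.exp (-z) := by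
  rw [← Real.exp_add]
  apply Real.exp_le_exp.2
  have := aux_rpow_lb hβ hz
  rw [neg_div]
  linarith

/-- Gamma-type integrability. -/
lemma aux_gamma_int {s c : ℝ} (hs : 0 ≤ s) (hc : 0 < c) :
    IntegrableOn (fun z : ℝ => z ^ s * Real.exp (-c * z)) (Set.Ioi 0) := by
  have h := integrableOn_rpow_mul_exp_neg_mul_rpow (p := 1) (s := s) (b := c)
    (by linarith) one_pos hc
  refine h.congr_fun (fun z hz => ?_) measurableSet_Ioi
  simp only [Real.rpow_one]

/-- Measurability of the kernel. -/
lemma aux_meas (β μ : ℝ) (x : ℂ) :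
    Measurable (fun z : ℝ =>
      ((z ^ μ * Real.exp (-z ^ (β + 1) / (β + 1)) : ℝ) : ℂ) * Complex.exp (-x * (z : ℂ))) := by
  apply Measurable.mul
  · exact (Complex.measurable_ofReal).comp
      (((measurable_id.pow_const _).mul
        ((((measurable_id.pow_const _).neg).div_const _).exp)))
  · exact Complex.continuous_exp.measurable.comp
      ((Complex.measurable_ofReal.const_mul (-x)))

/-- Integrability of the full kernel with `z^s` and exponent `Re x = r > -1`. -/
lemma aux_kernel_int {β s r : ℝ} (hβ : 0 ≤ β) (hs : 0 ≤ s) (hr : r < 1) :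
    IntegrableOn (fun z : ℝ =>
      z ^ s * Real.exp (-z ^ (β + 1) / (β + 1)) * Real.exp (r * z)) (Set.Ioi 0) := by
  have hpos : (0:ℝ) < 1 - r := by linarith
  have hbi : IntegrableOn (fun z : ℝ => Real.exp 1 * (z ^ s * Real.exp (-(1 - r) * z)))
      (Set.Ioi 0) := (aux_gamma_int hs hpos).const_mul _
  refine hbi.mono' ?_ ?_
  · exact (((measurable_id.pow_const _).mul
      ((((measurable_id.pow_const _).neg).div_const _).exp)).mul
      ((measurable_id.const_mul r).exp)).aestronglyMeasurable
  · filter_upwards [ae_restrict_mem measurableSet_Ioi] with z hz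
    have hz0 : (0:ℝ) ≤ z := le_of_lt hz
    have h1 : Real.exp (-z ^ (β + 1) / (β + 1)) ≤ Real.exp 1 * Real.exp (-z) :=
      aux_exp_bound hβ hz0
    have hzs : (0:ℝ) ≤ z ^ s := Real.rpow_nonneg hz0 _
    rw [Real.norm_eq_abs, abs_of_nonneg (by positivity)]
    calc z ^ s * Real.exp (-z ^ (β + 1) / (β + 1)) * Real.exp (r * z)
        ≤ z ^ s * (Real.exp 1 * Real.exp (-z)) * Real.exp (r * z) := by
          apply mul_le_mul_of_nonneg_right _ (Real.exp_nonneg _)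
          exact mul_le_mul_of_nonneg_left h1 hzs
      _ = Real.exp 1 * (z ^ s * Real.exp (-(1 - r) * z)) := by
          rw [show -(1 - r) * z = -z + r * z by ring, Real.exp_add]; ring
  
/-- Integrability of the complex integrand. -/
lemma aux_complex_int {β s : ℝ} (hβ : 0 ≤ β) (hs : 0 ≤ s) {x : ℂ} (hx : -1 < x.re) :
    IntegrableOn (fun z : ℝ =>
      ((z ^ s * Real.exp (-z ^ (β + 1) / (β + 1)) : ℝ) : ℂ) * Complex.exp (-x * (z : ℂ)))
      (Set.Ioi 0) := by
  have hint := aux_kernel_int (r := -x.re) hβ hs (by linarith)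
  refine hint.mono' ((aux_meas β s x).aestronglyMeasurable) ?_
  filter_upwards [ae_restrict_mem measurableSet_Ioi] with z hz
  have hz0 : (0:ℝ) ≤ z := le_of_lt hz
  rw [norm_mul, Complex.norm_real, Real.norm_eq_abs,
    Complex.norm_exp]
  have : (-x * (z:ℂ)).re = -x.re * z := by simp [Complex.mul_re]
  rw [this, abs_of_nonneg (by positivity)]

/-- The derivative of `G` in its complex argument. -/
lemma G_hasDerivAt {β μ : ℝ} (hβ : 0 ≤ β) (hμ : 0 ≤ μ) {l : ℂ} (hl : -1 < l.re) :
    HasDerivAt (G β μ) (-(G β (μ + 1) l)) l := by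
  set ε : ℝ := (1 + l.re) / 2 with hε
  have hε_pos : 0 < ε := by simp only [hε]; linarith
  set c : ℝ := ε - l.re with hc
  have hc1 : c < 1 := by simp only [hc, hε]; linarith
  set F : ℂ → ℝ → ℂ := fun x z =>
    ((z ^ μ * Real.exp (-z ^ (β + 1) / (β + 1)) : ℝ) : ℂ) * Complex.exp (-x * (z : ℂ)) with hF
  set F' : ℂ → ℝ → ℂ := fun x z =>
    ((z ^ μ * Real.exp (-z ^ (β + 1) / (β + 1)) : ℝ) : ℂ) *
      (-(z:ℂ) * Complex.exp (-x * (z : ℂ))) with hF'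
  set bound : ℝ → ℝ := fun z =>
    z ^ (μ + 1) * Real.exp (-z ^ (β + 1) / (β + 1)) * Real.exp (c * z) with hbound
  have key := hasDerivAt_integral_of_dominated_loc_of_deriv_le
    (μ := volume.restrict (Set.Ioi (0:ℝ))) (F := F) (F' := F') (x₀ := l)
    (bound := bound) (Metric.ball_mem_nhds l hε_pos)
    (Filter.Eventually.of_forall fun x => (aux_meas β μ x).aestronglyMeasurable)
    (aux_complex_int hβ hμ hl)
    ?_ ?_ ?_ ?_
  · -- convert the integral of F' to -(G β (μ+1) l)
    have heqint : (∫ z in Set.Ioi (0:ℝ), F' l z) = -(G β (μ + 1) l) := by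
      rw [G, ← integral_neg]
      refine setIntegral_congr_fun measurableSet_Ioi fun z hz => ?_
      have hz0 : (0:ℝ) < z := hz
      have hzr : z ^ (μ + 1) = z ^ μ * z := Real.rpow_add_one (ne_of_gt hz0) μ
      simp only [hF', hzr]
      push_cast
      ring
    rw [heqint] at key
    exact key.2
  · -- measurability of F' l
    apply Measurable.aestronglyMeasurable
    apply Measurable.mul
    · exact Complex.measurable_ofReal.comp
        (((measurable_id.pow_const _).mul
          ((((measurable_id.pow_const _).neg).div_const _).exp)))
    · exact (Complex.measurable_ofReal.neg).mul
        (Complex.continuous_exp.measurable.comp (Complex.measurable_ofReal.const_mul (-l)))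
  · -- bound
    filter_upwards [ae_restrict_mem measurableSet_Ioi] with z hz x hx
    have hz0 : (0:ℝ) < z := hz
    have hxre : l.re - ε < x.re := by
      have habs : |x.re - l.re| ≤ ‖x - l‖ := by
        rw [← Complex.sub_re]; exact Complex.abs_re_le_norm _
      have hball : ‖x - l‖ < ε := by
        rw [Metric.mem_ball, Complex.dist_eq] at hx; exact hx
      have := (abs_lt.1 (lt_of_le_of_lt habs hball)).1
      linarith
    have hre2 : (-x * (z:ℂ)).re = -x.re * z := by simp [Complex.mul_re]
    have hnorm : ‖F' x z‖ =
        z ^ μ * Real.exp (-z ^ (β + 1) / (β + 1)) * (z * Real.exp (-x.re * z)) := by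
      simp only [hF', norm_mul, norm_neg, Complex.norm_real, Real.norm_eq_abs,
        Complex.norm_exp, hre2]
      rw [abs_of_nonneg (by positivity), abs_of_nonneg hz0.le, Real.abs_exp]
    rw [hnorm]
    simp only [hbound]
    have hzr : z ^ (μ + 1) = z ^ μ * z := Real.rpow_add_one (ne_of_gt hz0) μ
    rw [hzr]
    have hexp : Real.exp (-x.re * z) ≤ Real.exp (c * z) := by
      apply Real.exp_le_exp.2
      have : -x.re < c := by simp only [hc]; linarith
      nlinarith
    calc z ^ μ * Real.exp (-z ^ (β + 1) / (β + 1)) * (z * Real.exp (-x.re * z))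
        ≤ z ^ μ * Real.exp (-z ^ (β + 1) / (β + 1)) * (z * Real.exp (c * z)) := by
          apply mul_le_mul_of_nonneg_left _ (by positivity)
          exact mul_le_mul_of_nonneg_left hexp hz0.le
      _ = z ^ μ * z * Real.exp (-z ^ (β + 1) / (β + 1)) * Real.exp (c * z) := by ring
  · -- integrability of bound
    exact aux_kernel_int hβ (by linarith) hc1
  · -- differentiability
    filter_upwards [ae_restrict_mem measurableSet_Ioi] with z _ x _
    have hinner : HasDerivAt (fun x : ℂ => -x * (z:ℂ)) (-(z:ℂ)) x := by
      simpa using ((hasDerivAt_id x).neg.mul_const (z:ℂ))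
    have hexp : HasDerivAt (fun x : ℂ => Complex.exp (-x * (z:ℂ)))
        (Complex.exp (-x * (z:ℂ)) * -(z:ℂ)) x :=
      (Complex.hasDerivAt_exp _).comp x hinner
    have := hexp.const_mul ((z ^ μ * Real.exp (-z ^ (β + 1) / (β + 1)) : ℝ) : ℂ)
    convert this using 1
    · rfl
    simp only [hF']
    ring

/-- Along a differentiable eigenvalue branch `λ(ϑ)` with `λ(ϑ₀) = it₀`,
`Re λ'(ϑ₀) = t₀ φ'(t₀)/|D|²` where `φ(t) = Re G_{β,ν}(it)` and
`D = ϑ₀ − G_{β,ν+1}(it₀)`. -/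
theorem stmt10 (β ν ϑ₀ t₀ δ : ℝ) (hβ : 0 ≤ β) (hν : 0 ≤ ν) (hϑ₀ : 0 < ϑ₀)
    (ht₀ : 0 < t₀) (hδ : 0 < δ) (lam : ℝ → ℂ)
    (hdiff : ∀ ϑ ∈ Set.Ioo (ϑ₀ - δ) (ϑ₀ + δ), DifferentiableAt ℝ lam ϑ)
    (hval : lam ϑ₀ = Complex.I * (t₀ : ℂ))
    (hre : ∀ ϑ ∈ Set.Ioo (ϑ₀ - δ) (ϑ₀ + δ), -1 < (lam ϑ).re)
    (heq : ∀ ϑ ∈ Set.Ioo (ϑ₀ - δ) (ϑ₀ + δ), (ϑ : ℂ) * lam ϑ + G β ν (lam ϑ) = 0)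
    (hD : (ϑ₀ : ℂ) - G β (ν + 1) (Complex.I * (t₀ : ℂ)) ≠ 0) :
    (deriv lam ϑ₀).re =
      t₀ * deriv (fun t : ℝ => (G β ν (Complex.I * (t : ℂ))).re) t₀ /
        ‖(ϑ₀ : ℂ) - G β (ν + 1) (Complex.I * (t₀ : ℂ))‖ ^ 2 := by
  have hmem : ϑ₀ ∈ Set.Ioo (ϑ₀ - δ) (ϑ₀ + δ) := ⟨by linarith, by linarith⟩
  set It : ℂ := Complex.I * (t₀ : ℂ) with hIt
  have hItre : -1 < It.re := by simp [hIt]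
  set Gd : ℂ := G β (ν + 1) It with hGd
  set D : ℂ := (ϑ₀ : ℂ) - Gd with hDdef
  have hGderiv : HasDerivAt (G β ν) (-Gd) It := G_hasDerivAt hβ hν hItre
  have hlam : HasDerivAt lam (deriv lam ϑ₀) ϑ₀ := (hdiff ϑ₀ hmem).hasDerivAt
  set L : ℂ := deriv lam ϑ₀ with hL
  -- derivative of the defining identity
  have hof : ∀ x : ℝ, HasDerivAt (fun ϑ : ℝ => (ϑ : ℂ)) 1 x := fun x => by
    simpa using (hasDerivAt_id x).ofReal_comp
  have h1 : HasDerivAt (fun ϑ : ℝ => (ϑ : ℂ) * lam ϑ + G β ν (lam ϑ))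
      ((1 * lam ϑ₀ + (ϑ₀ : ℂ) * L) + L • (-Gd)) ϑ₀ := by
    refine ((hof ϑ₀).mul hlam).add ?_
    exact hGderiv.scomp_of_eq ϑ₀ hlam hval.symm
  have h0 : HasDerivAt (fun ϑ : ℝ => (ϑ : ℂ) * lam ϑ + G β ν (lam ϑ)) 0 ϑ₀ := by
    refine (hasDerivAt_const ϑ₀ (0:ℂ)).congr_of_eventuallyEq ?_
    filter_upwards [Ioo_mem_nhds hmem.1 hmem.2] with ϑ hϑ
    exact heq ϑ hϑ
  have hkey : (1 * lam ϑ₀ + (ϑ₀ : ℂ) * L) + L • (-Gd) = 0 := h1.unique h0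
  have hLval : L = -It / D := by
    rw [hval] at hkey
    field_simp [hDdef]
    simp only [smul_eq_mul] at hkey
    linear_combination hkey
  -- derivative of t ↦ Re G(it)
  have hinner : HasDerivAt (fun t : ℝ => Complex.I * (t : ℂ)) Complex.I t₀ := by
    simpa using (hof t₀).const_mul Complex.I
  have h2 : HasDerivAt (fun t : ℝ => G β ν (Complex.I * (t : ℂ)))
      (Complex.I • (-Gd)) t₀ := hGderiv.scomp_of_eq t₀ hinner rfl
  have h3 : HasDerivAt (fun t : ℝ => (G β ν (Complex.I * (t : ℂ))).re)
      ((Complex.I • (-Gd)).re) t₀ :=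
    Complex.reCLM.hasFDerivAt.comp_hasDerivAt t₀ h2
  rw [h3.deriv]
  rw [hLval]
  have hnsq : Complex.normSq D ≠ 0 := by
    simpa [Complex.normSq_eq_norm_sq, pow_eq_zero_iff] using
      (norm_ne_zero_iff.2 hD)
  rw [Complex.sq_norm]
  rw [Complex.div_re]
  have hre1 : (-It).re = 0 := by simp [hIt]
  have him1 : (-It).im = -t₀ := by simp [hIt]
  have hsmul : (Complex.I • (-Gd)).re = Gd.im := by
    simp [Complex.smul_re]
  rw [hre1, him1, hsmul]
  have hDim : D.im = -Gd.im := by simp [hDdef]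
  rw [hDim]
  ring
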